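/- Let X be a GC_3 set and let ℓ be a 3-node line of X. Then the number of nodes of X that use ℓ is exactly 3, exactly 1, or exactly 0. -/

import Mathlib

open MvPolynomial

/-- Points of the plane `ℝ²`. -/
abbrev Pt : Type := Fin 2 → ℝ

/-- Bivariate real polynomials. -/
abbrev BPoly : Type := MvPolynomial (Fin 2) ℝ

/-- `X` is an `n`-poised node set: it has `N = (n+1)(n+2)/2` nodes and every
interpolation problem with polynomials of total degree at most `n` has a unique solution. -/
def IsPoised (n : ℕ) (X : Set Pt) : Prop :=
  X.ncard = (n + 1) * (n + 2) / 2 ∧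
  ∀ c : Pt → ℝ, ∃! p : BPoly, p.totalDegree ≤ n ∧ ∀ A ∈ X, eval A p = c A

/-- `p` is an `n`-fundamental polynomial of the node `A` for the node set `X`. -/
def IsFund (n : ℕ) (X : Set Pt) (A : Pt) (p : BPoly) : Prop :=
  p.totalDegree ≤ n ∧ eval A p = 1 ∧ ∀ B ∈ X, B ≠ A → eval B p = 0

/-- `X` is a `GC_n` set: it is `n`-poised and each node has a fundamental polynomial
that is a product of `n` polynomials of degree `1`. -/
def IsGC (n : ℕ) (X : Set Pt) : Prop :=
  IsPoised n X ∧
  ∀ A ∈ X, ∃ p : BPoly, IsFund n X A p ∧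
    ∃ f : Fin n → BPoly, (∀ i, (f i).totalDegree = 1) ∧ p = ∏ i, f i

/-- A line is the zero set of a polynomial of degree exactly `1`. -/
def IsLine (L : Set Pt) : Prop :=
  ∃ f : BPoly, f.totalDegree = 1 ∧ L = {x : Pt | eval x f = 0}

/-- A `k`-node line of `X`: a line passing through exactly `k` nodes of `X`. -/
def IsNodeLine (k : ℕ) (X : Set Pt) (L : Set Pt) : Prop :=
  IsLine L ∧ (X ∩ L).ncard = k

/-- A maximal line of an `n`-poised set `X`: an `(n+1)`-node line. -/
def IsMaxLine (n : ℕ) (X : Set Pt) (L : Set Pt) : Prop :=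
  IsNodeLine (n + 1) X L

/-- The node `A` uses the line `L`: a degree-1 polynomial whose zero set is `L`
divides the `n`-fundamental polynomial of `A` with respect to `X`. -/
def Uses (n : ℕ) (X : Set Pt) (L : Set Pt) (A : Pt) : Prop :=
  ∃ p f : BPoly, IsFund n X A p ∧ f.totalDegree = 1 ∧ L = {x : Pt | eval x f = 0} ∧ f ∣ p

/-- `X_ℓ`: the set of nodes of `X` that use the line `L`. -/
def UseSet (n : ℕ) (X : Set Pt) (L : Set Pt) : Set Pt :=
  {A ∈ X | Uses n X L A}

/-- For a `GC_3` set `X` and a `3`-node line `ℓ`, the number of nodes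
using `ℓ` is `3`, `1`, or `0`. -/
noncomputable def aff (a b c : ℝ) : BPoly := C a + C b * X 0 + C c * X 1
lemma eval_aff (a b c : ℝ) (x : Pt) : eval x (aff a b c) = a + b * x 0 + c * x 1 := by
  simp [aff]
lemma coeff_aff_zero (a b c : ℝ) : coeff 0 (aff a b c) = a := by
  simp [aff, coeff_X', coeff_C, eq_comm, Finsupp.single_eq_zero]
lemma coeff_aff_e0 (a b c : ℝ) : coeff (Finsupp.single (0 : Fin 2) 1) (aff a b c) = b := by
  simp [aff, coeff_X', coeff_C, eq_comm, Finsupp.single_eq_zero, Finsupp.single_eq_single_iff]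
lemma coeff_aff_e1 (a b c : ℝ) : coeff (Finsupp.single (1 : Fin 2) 1) (aff a b c) = c := by
  simp [aff, coeff_X', coeff_C, eq_comm, Finsupp.single_eq_zero, Finsupp.single_eq_single_iff]
lemma monomial_classify (m : Fin 2 →₀ ℕ) (h : m 0 + m 1 ≤ 1) :
    m = 0 ∨ m = Finsupp.single (0 : Fin 2) 1 ∨ m = Finsupp.single (1 : Fin 2) 1 := by
  have h0 : m 0 = 0 ∨ (m 0 = 1 ∧ m 1 = 0) ∨ m 1 = 0 := by omega
  rcases Nat.le_one_iff_eq_zero_or_eq_one.mp (le_trans (Nat.le_add_right _ _) h) with h0 | h0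
  · rcases Nat.le_one_iff_eq_zero_or_eq_one.mp (le_trans (Nat.le_add_left _ _) h) with h1 | h1
    · left; ext i; fin_cases i <;> simp [h0, h1]
    · right; right; ext i; fin_cases i <;> simp [h0, h1]
  · have h1 : m 1 = 0 := by omega
    right; left; ext i; fin_cases i <;> simp [h0, h1]
lemma sum_eq (m : Fin 2 →₀ ℕ) : (m.sum fun _ e => e) = m 0 + m 1 := by
  rw [Finsupp.sum_fintype _ _ (fun _ => rfl), Fin.sum_univ_two]
lemma repr1 (g : BPoly) (h : g.totalDegree ≤ 1) :
    g = aff (coeff 0 g) (coeff (Finsupp.single 0 1) g) (coeff (Finsupp.single 1 1) g) := by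
  ext m
  rcases eq_or_ne (coeff m g) 0 with hz | hnz
  · rcases eq_or_ne m 0 with rfl | hm0
    · rw [coeff_aff_zero, hz]
    rcases eq_or_ne m (Finsupp.single 0 1) with rfl | hm1
    · rw [coeff_aff_e0, hz]
    rcases eq_or_ne m (Finsupp.single 1 1) with rfl | hm2
    · rw [coeff_aff_e1, hz]
    rw [hz]
    simp only [aff, coeff_add, coeff_C, coeff_C_mul, coeff_X']
    rw [if_neg (fun hh => hm0 hh.symm), if_neg (fun hh => hm1 hh.symm),
      if_neg (fun hh => hm2 hh.symm)]
    ring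
  · have hmem : m ∈ g.support := by rwa [mem_support_iff]
    have := le_trans (le_totalDegree hmem) h
    rw [sum_eq] at this
    rcases monomial_classify m this with rfl | rfl | rfl
    · rw [coeff_aff_zero]
    · rw [coeff_aff_e0]
    · rw [coeff_aff_e1]
lemma repr1_nondeg (g : BPoly) (h : g.totalDegree = 1) :
    ¬ (coeff (Finsupp.single 0 1) g = 0 ∧ coeff (Finsupp.single 1 1) g = 0) := by
  rintro ⟨h0, h1⟩
  have := repr1 g h.le
  rw [h0, h1] at this
  have : g = C (coeff 0 g) := by rw [this]; simp [aff]
  rw [this, totalDegree_C] at h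
  exact absurd h (by norm_num)
lemma aff_totalDegree {a b c : ℝ} (h : ¬ (b = 0 ∧ c = 0)) : (aff a b c).totalDegree = 1 := by
  apply le_antisymm
  · apply le_trans (totalDegree_add _ _)
    simp only [max_le_iff]
    constructor
    · apply le_trans (totalDegree_add _ _)
      simp only [max_le_iff]
      refine ⟨by simp, le_trans (totalDegree_mul _ _) ?_⟩
      simp [totalDegree_X]
    · exact le_trans (totalDegree_mul _ _) (by simp [totalDegree_X])
  · rcases Classical.em (b = 0) with hb | hb
    · have hc : c ≠ 0 := fun hc => h ⟨hb, hc⟩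
      have hmem : Finsupp.single (1 : Fin 2) 1 ∈ (aff a b c).support := by
        rw [mem_support_iff, coeff_aff_e1]; exact hc
      have := le_totalDegree hmem
      rw [sum_eq] at this
      simpa using this
    · have hmem : Finsupp.single (0 : Fin 2) 1 ∈ (aff a b c).support := by
        rw [mem_support_iff, coeff_aff_e0]; exact hb
      have := le_totalDegree hmem
      rw [sum_eq] at this
      simpa using this
lemma U1 {g h : BPoly} (hg : g.totalDegree = 1) (hh : h.totalDegree ≤ 1) {P Q R : Pt}
    (hPQ : P ≠ Q) (hgP : eval P g = 0) (hgQ : eval Q g = 0) (hgR : eval R g = 0)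
    (hhP : eval P h = 0) (hhQ : eval Q h = 0) : eval R h = 0 := by
  set a := coeff 0 g; set b := coeff (Finsupp.single 0 1) g; set c := coeff (Finsupp.single 1 1) g
  set a' := coeff 0 h; set b' := coeff (Finsupp.single 0 1) h
  set c' := coeff (Finsupp.single 1 1) h
  have hgr := repr1 g hg.le
  have hhr := repr1 h hh
  have hbc := repr1_nondeg g hg
  rw [hgr, eval_aff] at hgP hgQ hgR
  rw [hhr, eval_aff] at hhP hhQ
  rw [hhr, eval_aff]
  -- difference vectors
  set v0 := Q 0 - P 0; set v1 := Q 1 - P 1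
  set w0 := R 0 - P 0; set w1 := R 1 - P 1
  have e1 : b * v0 + c * v1 = 0 := by simp only [v0, v1]; linarith
  have e2 : b * w0 + c * w1 = 0 := by simp only [w0, w1]; linarith
  have e3 : b' * v0 + c' * v1 = 0 := by simp only [v0, v1]; linarith
  have hv : ¬ (v0 = 0 ∧ v1 = 0) := by
    rintro ⟨h0, h1⟩
    apply hPQ
    have c0 : P 0 = Q 0 := by have : Q 0 - P 0 = 0 := h0; linarith
    have c1 : P 1 = Q 1 := by have : Q 1 - P 1 = 0 := h1; linarith
    funext i
    match i with
    | 0 => exact c0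
    | 1 => exact c1
  -- cross product vanishes
  have hcross : v0 * w1 - v1 * w0 = 0 := by
    rcases Classical.em (b = 0) with hb | hb
    · have hc : c ≠ 0 := fun hc => hbc ⟨hb, hc⟩
      rw [hb] at e1 e2
      have hv1 : v1 = 0 := by
        have h' : c * v1 = 0 := by linarith
        rcases mul_eq_zero.mp h' with h' | h'
        · exact absurd h' hc
        · exact h'
      have hw1 : w1 = 0 := by
        have h' : c * w1 = 0 := by linarith
        rcases mul_eq_zero.mp h' with h' | h'
        · exact absurd h' hc
        · exact h'
      rw [hv1, hw1]; ring
    · apply mul_left_cancel₀ hb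
      have : b * (v0 * w1 - v1 * w0) = (b * v0) * w1 - (b * w0) * v1 := by ring
      rw [this]
      have hbv : b * v0 = - (c * v1) := by linarith
      have hbw : b * w0 = - (c * w1) := by linarith
      rw [hbv, hbw]; ring
  -- conclude
  have key : b' * w0 + c' * w1 = 0 := by
    rcases Classical.em (v0 = 0) with hv0 | hv0
    · have hv1 : v1 ≠ 0 := fun h1 => hv ⟨hv0, h1⟩
      have hw1 : v1 * w0 = 0 := by rw [hv0] at hcross; linarith
      have hw0 : w0 = 0 := by
        rcases mul_eq_zero.mp hw1 with h | h; exact absurd h hv1; exact h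
      have hc' : c' * v1 = 0 := by rw [hv0] at e3; linarith
      have : c' = 0 := by
        rcases mul_eq_zero.mp hc' with h | h; exact h; exact absurd h hv1
      rw [hw0, this]; ring
    · apply mul_left_cancel₀ hv0
      have expand : v0 * (b' * w0 + c' * w1) =
          w0 * (b' * v0 + c' * v1) + c' * (v0 * w1 - v1 * w0) := by ring
      rw [expand, e3, hcross]; ring
  linear_combination key + hhP
lemma deg1_ne_zero {g : BPoly} (hg : g.totalDegree = 1) : g ≠ 0 := by
  intro h; rw [h, totalDegree_zero] at hg; exact absurd hg (by norm_num)
lemma line_through {P Q : Pt} (hPQ : P ≠ Q) :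
    ∃ g : BPoly, g.totalDegree = 1 ∧ eval P g = 0 ∧ eval Q g = 0 := by
  refine ⟨aff (-( (Q 1 - P 1) * P 0 + (P 0 - Q 0) * P 1)) (Q 1 - P 1) (P 0 - Q 0), ?_, ?_, ?_⟩
  · apply aff_totalDegree
    rintro ⟨h0, h1⟩
    apply hPQ
    have c0 : P 0 = Q 0 := by linarith
    have c1 : P 1 = Q 1 := by linarith
    funext i
    match i with
    | 0 => exact c0
    | 1 => exact c1
  · rw [eval_aff]; ring
  · rw [eval_aff]; ring
lemma line_param {g : BPoly} (hg : g.totalDegree = 1) :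
    ∃ P : ℝ → Pt, Function.Injective P ∧ ∀ t, eval (P t) g = 0 := by
  set a := coeff 0 g; set b := coeff (Finsupp.single 0 1) g; set c := coeff (Finsupp.single 1 1) g
  have hbc := repr1_nondeg g hg
  have hgr := repr1 g hg.le
  have hs : b ^ 2 + c ^ 2 ≠ 0 := by
    intro h
    have hb : b = 0 := by nlinarith [sq_nonneg b, sq_nonneg c]
    have hc : c = 0 := by nlinarith [sq_nonneg b, sq_nonneg c]
    exact hbc ⟨hb, hc⟩
  refine ⟨fun t => fun i => if i = 0 then -a*b/(b^2+c^2) - t * c else -a*c/(b^2+c^2) + t * b,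
    ?_, ?_⟩
  · intro s t hst
    have h0 : -a*b/(b^2+c^2) - s * c = -a*b/(b^2+c^2) - t * c := congrFun hst 0
    have h1 : -a*c/(b^2+c^2) + s * b = -a*c/(b^2+c^2) + t * b := congrFun hst 1
    have hb' : s * b = t * b := by linarith
    have hc' : s * c = t * c := by linarith
    rcases Classical.em (b = 0) with hb | hb
    · have hc : c ≠ 0 := fun hc => hbc ⟨hb, hc⟩
      exact mul_right_cancel₀ hc hc'
    · exact mul_right_cancel₀ hb hb'
  · intro t
    rw [hgr, eval_aff]
    simp only [if_pos rfl, if_neg (by norm_num : (1 : Fin 2) ≠ 0), if_true]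
    field_simp
    ring
lemma vanish3 {X : Set Pt} (hX : IsPoised 3 X) {q : BPoly} (hdeg : q.totalDegree ≤ 3)
    (h0 : ∀ A ∈ X, eval A q = 0) : q = 0 := by
  obtain ⟨p, _, huniq⟩ := hX.2 (fun _ => 0)
  have h1 : q = p := huniq q ⟨hdeg, h0⟩
  have h2 : (0 : BPoly) = p := huniq 0 ⟨by simp, by simp⟩
  rw [h1, ← h2]
lemma fund_unique {X : Set Pt} (hX : IsPoised 3 X) {A : Pt} (hA : A ∈ X) {p q : BPoly}
    (hp : IsFund 3 X A p) (hq : IsFund 3 X A q) : p = q := by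
  classical
  obtain ⟨r, _, huniq⟩ := hX.2 (fun B => if B = A then 1 else 0)
  have h1 : p = r := huniq p ⟨hp.1, fun B hB => by
    rcases eq_or_ne B A with rfl | hBA
    · rw [if_pos rfl]; exact hp.2.1
    · rw [if_neg hBA]; exact hp.2.2 B hB hBA⟩
  have h2 : q = r := huniq q ⟨hq.1, fun B hB => by
    rcases eq_or_ne B A with rfl | hBA
    · rw [if_pos rfl]; exact hq.2.1
    · rw [if_neg hBA]; exact hq.2.2 B hB hBA⟩
  rw [h1, ← h2]
lemma no5 {X : Set Pt} (hX : IsGC 3 X) {h : BPoly} (hh : h.totalDegree = 1)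
    {B : Fin 5 → Pt} (hBinj : Function.Injective B) (hBX : ∀ i, B i ∈ X)
    (hB0 : ∀ i, eval (B i) h = 0) : False := by
  obtain ⟨p, hfund, f, hdeg1, rfl⟩ := hX.2 (B 0) (hBX 0)
  have hkill : ∀ i : Fin 4, ∃ k : Fin 3, eval (B i.succ) (f k) = 0 := by
    intro i
    have h0 : eval (B i.succ) (∏ k, f k) = 0 :=
      hfund.2.2 _ (hBX _) (fun hh => by
        have : i.succ = 0 := hBinj hh
        exact absurd this (Fin.succ_ne_zero i))
    rw [eval_prod] at h0
    obtain ⟨k, _, hk⟩ := Finset.prod_eq_zero_iff.mp h0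
    exact ⟨k, hk⟩
  choose κ hκ using hkill
  obtain ⟨i, j, hij, hmap⟩ := Fintype.exists_ne_map_eq_of_card_lt κ (by norm_num)
  have hBij : B i.succ ≠ B j.succ := fun hh => hij (Fin.succ_injective _ (hBinj hh))
  have hA0 : eval (B 0) (f (κ i)) = 0 := by
    refine U1 hh (hdeg1 (κ i)).le hBij (hB0 _) (hB0 _) (hB0 0) (hκ i) ?_
    rw [hmap]; exact hκ j
  have h1 : eval (B 0) (∏ k, f k) = 1 := hfund.2.1
  rw [eval_prod, Finset.prod_eq_zero (Finset.mem_univ (κ i)) hA0] at h1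
  exact absurd h1 (by norm_num)
lemma exists_fin_inj {α : Type*} {S : Set α} {n : ℕ} (hn : 0 < n) (h : n ≤ S.ncard) :
    ∃ B : Fin n → α, Function.Injective B ∧ ∀ i, B i ∈ S := by
  obtain ⟨t, hts, htc⟩ := Set.exists_subset_card_eq h
  have htfin : t.Finite := by
    by_contra hinf
    rw [Set.Infinite.ncard hinf] at htc
    omega
  have : Fintype t := htfin.fintype
  have hcard : Fintype.card t = n := by
    rw [← Nat.card_coe_set_eq, Nat.card_eq_fintype_card] at htc
    exact htc
  let e : Fin n ≃ t := (Fintype.equivFinOfCardEq hcard).symm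
  exact ⟨fun i => (e i : α), fun i j hij => e.injective (Subtype.ext hij),
    fun i => hts (e i).2⟩
def CoverAt (X ℓ : Set Pt) (A : Pt) : Prop :=
  ∃ g₁ g₂ : BPoly, g₁.totalDegree = 1 ∧ g₂.totalDegree = 1 ∧
    eval A g₁ ≠ 0 ∧ eval A g₂ ≠ 0 ∧
    ∀ B ∈ X, B ∉ ℓ → B ≠ A → (eval B g₁ = 0 ∨ eval B g₂ = 0)
lemma cover_of_prod {X ℓ : Set Pt} {f' g₁ g₂ gk : BPoly} {A : Pt}
    (hZ : ℓ = {x : Pt | eval x f' = 0})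
    (hd1 : g₁.totalDegree = 1) (hd2 : g₂.totalDegree = 1)
    (hsup : ∀ x : Pt, eval x gk = 0 → eval x f' = 0)
    (hevalA : eval A gk * eval A g₁ * eval A g₂ = 1)
    (hvanish : ∀ B ∈ X, B ≠ A → eval B gk * eval B g₁ * eval B g₂ = 0) :
    CoverAt X ℓ A := by
  refine ⟨g₁, g₂, hd1, hd2, ?_, ?_, ?_⟩
  · intro h; rw [h] at hevalA; simpa using hevalA
  · intro h; rw [h] at hevalA; simpa using hevalA
  · intro B hBX hBl hBA
    have h0 := hvanish B hBX hBA
    have hk : eval B gk ≠ 0 := by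
      intro hk0
      exact hBl (by rw [hZ]; exact hsup B hk0)
    rcases mul_eq_zero.mp h0 with h | h
    · rcases mul_eq_zero.mp h with h | h
      · exact absurd h hk
      · exact Or.inl h
    · exact Or.inr h
lemma uses_forward {X ℓ : Set Pt} (hGC : IsGC 3 X) {A : Pt}
    (hA : A ∈ UseSet 3 X ℓ) : A ∈ X ∧ A ∉ ℓ ∧ CoverAt X ℓ A := by
  obtain ⟨hAX, p, f', hfund, hdegf', hZ, hdvd⟩ := hA
  obtain ⟨q, rfl⟩ := hdvd
  refine ⟨hAX, ?_, ?_⟩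
  · intro hAl
    have h1 : eval A (f' * q) = 1 := hfund.2.1
    have h2 : eval A f' = 0 := by rw [hZ] at hAl; exact hAl
    rw [eval_mul, h2, zero_mul] at h1
    exact absurd h1 (by norm_num)
  obtain ⟨p₀, hfund₀, f, hdeg1, rfl⟩ := hGC.2 A hAX
  have huniq : f' * q = ∏ i, f i := fund_unique hGC.1 hAX hfund hfund₀
  have hℓv : ∀ x : Pt, eval x f' = 0 → eval x (∏ i, f i) = 0 := by
    intro x hx; rw [← huniq, eval_mul, hx, zero_mul]
  obtain ⟨P, hPinj, hP0⟩ := line_param hdegf'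
  have hkill : ∀ i : Fin 4, ∃ k : Fin 3, eval (P i) (f k) = 0 := by
    intro i
    have h0 := hℓv (P i) (hP0 i)
    rw [eval_prod] at h0
    obtain ⟨k, _, hk⟩ := Finset.prod_eq_zero_iff.mp h0
    exact ⟨k, hk⟩
  choose κ hκ using hkill
  obtain ⟨i, j, hij, hmap⟩ := Fintype.exists_ne_map_eq_of_card_lt κ (by norm_num)
  have hPij : P i ≠ P j := fun hh =>
    hij (Fin.ext (Nat.cast_injective (hPinj hh)))
  have hfk_j : eval (P j) (f (κ i)) = 0 := by rw [hmap]; exact hκ j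
  have hsup : ∀ x : Pt, eval x (f (κ i)) = 0 → eval x f' = 0 := fun x hx =>
    U1 (hdeg1 (κ i)) hdegf'.le hPij (hκ i) hfk_j hx (hP0 i) (hP0 j)
  obtain ⟨k, hkeq⟩ : ∃ k, κ i = k := ⟨κ i, rfl⟩
  rw [hkeq] at hsup
  have hevalA : eval A (f 0) * eval A (f 1) * eval A (f 2) = 1 := by
    have := hfund₀.2.1
    rwa [eval_prod, Fin.prod_univ_three] at this
  have hvan : ∀ B ∈ X, B ≠ A → eval B (f 0) * eval B (f 1) * eval B (f 2) = 0 := by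
    intro B hB hBA
    have := hfund₀.2.2 B hB hBA
    rwa [eval_prod, Fin.prod_univ_three] at this
  fin_cases k
  · replace hsup : ∀ x : Pt, eval x (f 0) = 0 → eval x f' = 0 := hsup
    exact cover_of_prod hZ (hdeg1 1) (hdeg1 2) hsup hevalA hvan
  · replace hsup : ∀ x : Pt, eval x (f 1) = 0 → eval x f' = 0 := hsup
    exact cover_of_prod hZ (hdeg1 0) (hdeg1 2) hsup
      (by linear_combination hevalA) (fun B hB hBA => by linear_combination hvan B hB hBA)
  · replace hsup : ∀ x : Pt, eval x (f 2) = 0 → eval x f' = 0 := hsup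
    exact cover_of_prod hZ (hdeg1 0) (hdeg1 1) hsup
      (by linear_combination hevalA) (fun B hB hBA => by linear_combination hvan B hB hBA)
lemma uses_backward {X ℓ : Set Pt} (hpoise : IsPoised 3 X) {fℓ : BPoly}
    (hdegf : fℓ.totalDegree = 1) (hZ : ℓ = {x : Pt | eval x fℓ = 0}) {A : Pt} (hAX : A ∈ X)
    (hAl : A ∉ ℓ) {q : BPoly} (hq0 : q ≠ 0) (hqdeg : q.totalDegree ≤ 2)
    (hqv : ∀ B ∈ X, B ∉ ℓ → B ≠ A → eval B q = 0) : A ∈ UseSet 3 X ℓ := by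
  have hfA : eval A fℓ ≠ 0 := by rw [hZ] at hAl; exact hAl
  have hdegfq : (fℓ * q).totalDegree ≤ 3 :=
    le_trans (totalDegree_mul _ _) (by rw [hdegf]; omega)
  have hqA : eval A q ≠ 0 := by
    intro hqA0
    have hv : ∀ B ∈ X, eval B (fℓ * q) = 0 := by
      intro B hB
      rw [eval_mul]
      by_cases hBl : B ∈ ℓ
      · rw [hZ] at hBl; rw [hBl, zero_mul]
      · rcases eq_or_ne B A with rfl | hBA
        · rw [hqA0, mul_zero]
        · rw [hqv B hB hBl hBA, mul_zero]
    have := vanish3 hpoise hdegfq hv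
    rcases mul_eq_zero.mp this with h | h
    · exact deg1_ne_zero hdegf h
    · exact hq0 h
  set c := (eval A fℓ * eval A q)⁻¹ with hc
  refine ⟨hAX, C c * (fℓ * q), fℓ, ⟨?_, ?_, ?_⟩, hdegf, hZ, ⟨C c * q, by ring⟩⟩
  · calc (C c * (fℓ * q)).totalDegree ≤ (C c).totalDegree + (fℓ * q).totalDegree :=
        totalDegree_mul _ _
    _ ≤ 0 + 3 := add_le_add (by simp) hdegfq
    _ = 3 := by norm_num
  · rw [eval_mul, eval_C, eval_mul, hc]
    exact inv_mul_cancel₀ (mul_ne_zero hfA hqA)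
  · intro B hB hBA
    rw [eval_mul, eval_C, eval_mul]
    by_cases hBl : B ∈ ℓ
    · rw [hZ] at hBl; rw [hBl, zero_mul, mul_zero]
    · rw [hqv B hB hBl hBA, mul_zero, mul_zero]
def CoverY (Y : Set Pt) (A : Pt) : Prop :=
  ∃ g₁ g₂ : BPoly, g₁.totalDegree = 1 ∧ g₂.totalDegree = 1 ∧
    eval A g₁ ≠ 0 ∧ eval A g₂ ≠ 0 ∧
    ∀ B ∈ Y, B ≠ A → (eval B g₁ = 0 ∨ eval B g₂ = 0)
lemma part_aux {Y : Set Pt} (hfin : Y.Finite) (hY7 : Y.ncard = 7)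
    (hno4 : ∀ g : BPoly, g.totalDegree = 1 → {C ∈ Y | eval C g = 0}.ncard ≤ 3)
    {A B : Pt} (hA : A ∈ Y) (hB : B ∈ Y) (hBA : B ≠ A)
    {g g' : BPoly} (hdg : g.totalDegree = 1) (hdg' : g'.totalDegree = 1)
    (hgA : eval A g ≠ 0) (hg'A : eval A g' ≠ 0)
    (hcov : ∀ C ∈ Y, C ≠ A → (eval C g = 0 ∨ eval C g' = 0))
    (hgB : eval B g = 0) :
    {C ∈ Y | C ≠ A ∧ eval C g = 0}.ncard = 3 ∧
    {C ∈ Y | C ≠ A ∧ eval C g ≠ 0}.ncard = 3 ∧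
    {C ∈ Y | C ≠ A ∧ eval C g ≠ 0} = {C ∈ Y | C ≠ A ∧ eval C g' = 0} := by
  set P := {C ∈ Y | C ≠ A ∧ eval C g = 0} with hPdef
  set Q := {C ∈ Y | C ≠ A ∧ eval C g ≠ 0} with hQdef
  set Q2 := {C ∈ Y | C ≠ A ∧ eval C g' = 0} with hQ2def
  have hPY : P ⊆ Y := fun C hC => hC.1
  have hQY : Q ⊆ Y := fun C hC => hC.1
  have hQ2Y : Q2 ⊆ Y := fun C hC => hC.1
  have hPfin : P.Finite := hfin.subset hPY
  have hQfin : Q.Finite := hfin.subset hQY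
  have hQ2fin : Q2.Finite := hfin.subset hQ2Y
  have hP3 : P.ncard ≤ 3 := by
    refine le_trans (Set.ncard_le_ncard ?_ (hfin.subset (fun C hC => hC.1))) (hno4 g hdg)
    exact fun C hC => ⟨hC.1, hC.2.2⟩
  have hQsub : Q ⊆ Q2 := by
    intro C hC
    rcases hcov C hC.1 hC.2.1 with h | h
    · exact absurd h hC.2.2
    · exact ⟨hC.1, hC.2.1, h⟩
  have hQ23 : Q2.ncard ≤ 3 := by
    refine le_trans (Set.ncard_le_ncard ?_ (hfin.subset (fun C hC => hC.1))) (hno4 g' hdg')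
    exact fun C hC => ⟨hC.1, hC.2.2⟩
  have hQ3 : Q.ncard ≤ 3 := le_trans (Set.ncard_le_ncard hQsub hQ2fin) hQ23
  have hunion : P ∪ Q = Y \ {A} := by
    ext C
    constructor
    · rintro (⟨hCY, hCA, _⟩ | ⟨hCY, hCA, _⟩) <;> exact ⟨hCY, hCA⟩
    · rintro ⟨hCY, hCA⟩
      by_cases hg0 : eval C g = 0
      · exact Or.inl ⟨hCY, hCA, hg0⟩
      · exact Or.inr ⟨hCY, hCA, hg0⟩
  have hdisj : Disjoint P Q := by
    rw [Set.disjoint_left]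
    rintro C ⟨_, _, h0⟩ ⟨_, _, h1⟩
    exact h1 h0
  have h6 : (Y \ {A}).ncard = 6 := by
    rw [Set.ncard_diff_singleton_of_mem hA, hY7]
  have hsum : P.ncard + Q.ncard = 6 := by
    rw [← Set.ncard_union_eq hdisj hPfin hQfin, hunion, h6]
  have hPn : P.ncard = 3 := by omega
  have hQn : Q.ncard = 3 := by omega
  refine ⟨hPn, hQn, Set.eq_of_subset_of_ncard_le hQsub (by omega) hQ2fin⟩
lemma mixed_case {Y : Set Pt} (hfin : Y.Finite)
    {A B u v : Pt} (hAB : A ≠ B)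
    {g g' h h' : BPoly}
    (hdg : g.totalDegree = 1) (hdg' : g'.totalDegree = 1)
    (hdh : h.totalDegree = 1) (hdh' : h'.totalDegree = 1)
    (hBY : B ∈ Y) (hBA : B ≠ A) (hgB : eval B g = 0)
    -- the partition of `Y \ {A}` for `A`
    (hPn : {C ∈ Y | C ≠ A ∧ eval C g = 0}.ncard = 3)
    (hQn : {C ∈ Y | C ≠ A ∧ eval C g ≠ 0}.ncard = 3)
    (hQeq : {C ∈ Y | C ≠ A ∧ eval C g ≠ 0} = {C ∈ Y | C ≠ A ∧ eval C g' = 0})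
    -- facts about `B`'s partition: `h`-zeros in `Y \ {B}` are exactly `{A, u, v}`,
    -- and `h`-nonzeros are `h'`-zeros
    (hP'mem : ∀ C ∈ Y, C ≠ B → eval C h = 0 → (C = A ∨ C = u ∨ C = v))
    (hQ'mem : ∀ C ∈ Y, C ≠ B → eval C h ≠ 0 → eval C h' = 0)
    -- `u ∈ P`, `v ∈ Q`
    (huY : u ∈ Y) (huA : u ≠ A) (huB : u ≠ B) (hgu : eval u g = 0) (hhu : eval u h = 0)
    (hvY : v ∈ Y) (hvA : v ≠ A) (hvB : v ≠ B) (hgv : eval v g ≠ 0) (hhv : eval v h = 0) :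
    False := by
  set P := {C ∈ Y | C ≠ A ∧ eval C g = 0} with hPdef
  set Q := {C ∈ Y | C ≠ A ∧ eval C g ≠ 0} with hQdef
  have hPfin : P.Finite := hfin.subset (fun C hC => hC.1)
  have hQfin : Q.Finite := hfin.subset (fun C hC => hC.1)
  have hBP : B ∈ P := ⟨hBY, hBA, hgB⟩
  have huP : u ∈ P := ⟨huY, huA, hgu⟩
  have hvQ : v ∈ Q := ⟨hvY, hvA, hgv⟩
  -- extract the third point p' of P
  have huPB : u ∈ P \ {B} := ⟨huP, huB⟩
  have h1 : ((P \ {B}) \ {u}).ncard = 1 := by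
    rw [Set.ncard_diff_singleton_of_mem huPB,
        Set.ncard_diff_singleton_of_mem hBP, hPn]
  obtain ⟨p', hp'⟩ := Set.ncard_eq_one.mp h1
  have hp'mem : p' ∈ (P \ {B}) \ {u} := by rw [hp']; rfl
  obtain ⟨⟨⟨hp'Y, hp'A, hgp'⟩, hp'B⟩, hp'u⟩ := hp'mem
  have hp'B : p' ≠ B := hp'B
  have hp'u : p' ≠ u := hp'u
  have hp'v : p' ≠ v := fun hh => hgv (hh ▸ hgp')
  -- h does not vanish at p'
  have hhp' : eval p' h ≠ 0 := by
    intro h0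
    rcases hP'mem p' hp'Y hp'B h0 with rfl | rfl | rfl
    · exact hp'A rfl
    · exact hp'u rfl
    · exact hp'v rfl
  have hh'p' : eval p' h' = 0 := hQ'mem p' hp'Y hp'B hhp'
  -- extract the two other points of Q
  have h2 : (Q \ {v}).ncard = 2 := by
    rw [Set.ncard_diff_singleton_of_mem hvQ, hQn]
  obtain ⟨q₁, q₂, hq12, hQv⟩ := Set.ncard_eq_two.mp h2
  have hq1mem : q₁ ∈ Q \ {v} := by rw [hQv]; left; rfl
  have hq2mem : q₂ ∈ Q \ {v} := by rw [hQv]; right; rfl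
  obtain ⟨⟨hq1Y, hq1A, hgq1⟩, hq1v⟩ := hq1mem
  obtain ⟨⟨hq2Y, hq2A, hgq2⟩, hq2v⟩ := hq2mem
  have hq1v : q₁ ≠ v := hq1v
  have hq2v : q₂ ≠ v := hq2v
  -- q_i are g'-zeros
  have hQ2q1 : eval q₁ g' = 0 := by
    have : q₁ ∈ {C ∈ Y | C ≠ A ∧ eval C g' = 0} := hQeq ▸ (⟨hq1Y, hq1A, hgq1⟩ : q₁ ∈ Q)
    exact this.2.2
  have hQ2q2 : eval q₂ g' = 0 := by
    have : q₂ ∈ {C ∈ Y | C ≠ A ∧ eval C g' = 0} := hQeq ▸ (⟨hq2Y, hq2A, hgq2⟩ : q₂ ∈ Q)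
    exact this.2.2
  -- q_i are h'-zeros
  have hq1B : q₁ ≠ B := fun hh => hgq1 (hh ▸ hgB)
  have hq2B : q₂ ≠ B := fun hh => hgq2 (hh ▸ hgB)
  have hhq1 : eval q₁ h ≠ 0 := by
    intro h0
    rcases hP'mem q₁ hq1Y hq1B h0 with rfl | rfl | rfl
    · exact hq1A rfl
    · exact hgq1 hgu
    · exact hq1v rfl
  have hhq2 : eval q₂ h ≠ 0 := by
    intro h0
    rcases hP'mem q₂ hq2Y hq2B h0 with rfl | rfl | rfl
    · exact hq2A rfl
    · exact hgq2 hgu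
    · exact hq2v rfl
  have hh'q1 : eval q₁ h' = 0 := hQ'mem q₁ hq1Y hq1B hhq1
  have hh'q2 : eval q₂ h' = 0 := hQ'mem q₂ hq2Y hq2B hhq2
  -- conclude : g' vanishes at p'
  have hg'p' : eval p' g' = 0 :=
    U1 hdh' hdg'.le hq12 hh'q1 hh'q2 hh'p' hQ2q1 hQ2q2
  have : p' ∈ Q := by
    rw [hQeq]
    exact ⟨hp'Y, hp'A, hg'p'⟩
  exact this.2.2 hgp'
lemma part {Y : Set Pt} (hfin : Y.Finite) (hY7 : Y.ncard = 7)
    (hno4 : ∀ g : BPoly, g.totalDegree = 1 → {C ∈ Y | eval C g = 0}.ncard ≤ 3)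
    {A B : Pt} (hA : A ∈ Y) (hB : B ∈ Y) (hBA : B ≠ A) (hc : CoverY Y A) :
    ∃ g g' : BPoly, g.totalDegree = 1 ∧ g'.totalDegree = 1 ∧
      eval A g ≠ 0 ∧ eval A g' ≠ 0 ∧ eval B g = 0 ∧
      {C ∈ Y | C ≠ A ∧ eval C g = 0}.ncard = 3 ∧
      {C ∈ Y | C ≠ A ∧ eval C g ≠ 0}.ncard = 3 ∧
      {C ∈ Y | C ≠ A ∧ eval C g ≠ 0} = {C ∈ Y | C ≠ A ∧ eval C g' = 0} := by
  obtain ⟨g₁, g₂, hd1, hd2, hA1, hA2, hcov⟩ := hc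
  rcases hcov B hB hBA with hgB | hgB
  · obtain ⟨x, y, z⟩ := part_aux hfin hY7 hno4 hA hB hBA hd1 hd2 hA1 hA2 hcov hgB
    exact ⟨g₁, g₂, hd1, hd2, hA1, hA2, hgB, x, y, z⟩
  · obtain ⟨x, y, z⟩ := part_aux hfin hY7 hno4 hA hB hBA hd2 hd1 hA2 hA1
      (fun C hC hCA => (hcov C hC hCA).symm) hgB
    exact ⟨g₂, g₁, hd2, hd1, hA2, hA1, hgB, x, y, z⟩
lemma two_users {Y : Set Pt} (hfin : Y.Finite) (hY7 : Y.ncard = 7)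
    (hno4 : ∀ g : BPoly, g.totalDegree = 1 → {C ∈ Y | eval C g = 0}.ncard ≤ 3)
    {A B : Pt} (hA : A ∈ Y) (hB : B ∈ Y) (hAB : A ≠ B)
    (hcA : CoverY Y A) (hcB : CoverY Y B) : False := by
  obtain ⟨g, g', hdg, hdg', hgA, hg'A, hgB, hPn, hQn, hQeq⟩ :=
    part hfin hY7 hno4 hA hB (Ne.symm hAB) hcA
  obtain ⟨h, h', hdh, hdh', hhB, hh'B, hhA, hP'n, hQ'n, hQ'eq⟩ :=
    part hfin hY7 hno4 hB hA hAB hcB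
  set P' := {C ∈ Y | C ≠ B ∧ eval C h = 0} with hP'def
  have hP'fin : P'.Finite := hfin.subset (fun C hC => hC.1)
  have hAP' : A ∈ P' := ⟨hA, hAB, hhA⟩
  have h2 : (P' \ {A}).ncard = 2 := by
    rw [Set.ncard_diff_singleton_of_mem hAP', hP'n]
  obtain ⟨u, v, huv, hP'A⟩ := Set.ncard_eq_two.mp h2
  have humem : u ∈ P' \ {A} := by rw [hP'A]; left; rfl
  have hvmem : v ∈ P' \ {A} := by rw [hP'A]; right; rfl
  obtain ⟨⟨huY, huB, hhu⟩, huA⟩ := humem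
  obtain ⟨⟨hvY, hvB, hhv⟩, hvA⟩ := hvmem
  have huA : u ≠ A := huA
  have hvA : v ≠ A := hvA
  have hP'mem : ∀ C ∈ Y, C ≠ B → eval C h = 0 → (C = A ∨ C = u ∨ C = v) := by
    intro C hCY hCB hC0
    rcases eq_or_ne C A with rfl | hCA
    · exact Or.inl rfl
    · have : C ∈ P' \ {A} := ⟨⟨hCY, hCB, hC0⟩, hCA⟩
      rw [hP'A] at this
      rcases this with rfl | rfl
      · exact Or.inr (Or.inl rfl)
      · exact Or.inr (Or.inr rfl)
  have hQ'mem : ∀ C ∈ Y, C ≠ B → eval C h ≠ 0 → eval C h' = 0 := by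
    intro C hCY hCB hC0
    have : C ∈ {C ∈ Y | C ≠ B ∧ eval C h ≠ 0} := ⟨hCY, hCB, hC0⟩
    rw [hQ'eq] at this
    exact this.2.2
  by_cases hug : eval u g = 0
  · by_cases hvg : eval v g = 0
    · -- both in P : contradiction with h(B) ≠ 0
      exact hhB (U1 hdg hdh.le huv hug hvg hgB hhu hhv)
    · exact mixed_case hfin hAB hdg hdg' hdh hdh' hB (Ne.symm hAB) hgB hPn hQn hQeq
        hP'mem hQ'mem huY huA huB hug hhu hvY hvA hvB hvg hhv
  · by_cases hvg : eval v g = 0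
    · exact mixed_case hfin hAB hdg hdg' hdh hdh' hB (Ne.symm hAB) hgB hPn hQn hQeq
        (fun C h1 h2 h3 => (hP'mem C h1 h2 h3).imp id Or.symm)
        hQ'mem hvY hvA hvB hvg hhv huY huA huB hug hhu
    · -- both in Q : g' vanishes at u, v hence at A
      have hg'u : eval u g' = 0 := by
        have : u ∈ {C ∈ Y | C ≠ A ∧ eval C g ≠ 0} := ⟨huY, huA, hug⟩
        rw [hQeq] at this
        exact this.2.2
      have hg'v : eval v g' = 0 := by
        have : v ∈ {C ∈ Y | C ≠ A ∧ eval C g ≠ 0} := ⟨hvY, hvA, hvg⟩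
        rw [hQeq] at this
        exact this.2.2
      exact hg'A (U1 hdh hdg'.le huv hhu hhv hhA hg'u hg'v)

theorem GC3_threeNodeLine_useSet_card (X ℓ : Set Pt) (hX : IsGC 3 X)
    (hℓ : IsNodeLine 3 X ℓ) :
    (UseSet 3 X ℓ).ncard = 3 ∨ (UseSet 3 X ℓ).ncard = 1 ∨ (UseSet 3 X ℓ).ncard = 0 := by
  obtain ⟨⟨fℓ, hdegfℓ, hZ⟩, hX3⟩ := hℓ
  have hX10 : X.ncard = 10 := by rw [hX.1.1]
  have hfin : X.Finite := by
    by_contra hinf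
    rw [Set.Infinite.ncard hinf] at hX10
    exact absurd hX10 (by norm_num)
  set Y : Set Pt := {B ∈ X | B ∉ ℓ} with hYdef
  have hYX : Y ⊆ X := fun B hB => hB.1
  have hYfin : Y.Finite := hfin.subset hYX
  have hY7 : Y.ncard = 7 := by
    have hYeq : Y = X \ (X ∩ ℓ) := by
      ext B
      simp only [hYdef, Set.mem_setOf_eq, Set.mem_diff, Set.mem_inter_iff]
      tauto
    rw [hYeq, Set.ncard_diff Set.inter_subset_left (hfin.subset Set.inter_subset_left),
      hX10, hX3]
  -- no 5 collinear points of X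
  have hno5card : ∀ g : BPoly, g.totalDegree = 1 → {C ∈ X | eval C g = 0}.ncard ≤ 4 := by
    intro g hdg
    by_contra hc
    push_neg at hc
    obtain ⟨B, hBinj, hBmem⟩ := exists_fin_inj (by norm_num) (show 5 ≤ _ from hc)
    exact no5 hX hdg hBinj (fun i => (hBmem i).1) (fun i => (hBmem i).2)
  have hUseY : UseSet 3 X ℓ ⊆ Y := fun A hA =>
    ⟨(uses_forward hX hA).1, (uses_forward hX hA).2.1⟩
  have hUSfin : (UseSet 3 X ℓ).Finite := hYfin.subset hUseY
  have covconv : ∀ {A : Pt}, CoverAt X ℓ A → CoverY Y A := by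
    rintro A ⟨g1, g2, a, b, c, d, e⟩
    exact ⟨g1, g2, a, b, c, d, fun B hB hBA => e B hB.1 hB.2 hBA⟩
  by_cases h4 : ∃ g : BPoly, g.totalDegree = 1 ∧ 4 ≤ {C ∈ Y | eval C g = 0}.ncard
  · -- there is a 4-point line in Y : exactly three users
    obtain ⟨g, hdg, hge4⟩ := h4
    set M : Set Pt := {C ∈ Y | eval C g = 0} with hMdef
    have hMY : M ⊆ Y := fun C hC => hC.1
    have hMfin : M.Finite := hYfin.subset hMY
    have hM4 : M.ncard = 4 := by
      have hle : M.ncard ≤ 4 := by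
        refine le_trans (Set.ncard_le_ncard ?_ (hfin.subset (fun C hC => hC.1))) (hno5card g hdg)
        exact fun C hC => ⟨hYX hC.1, hC.2⟩
      omega
    set T : Set Pt := Y \ M with hTdef
    have hT3 : T.ncard = 3 := by
      rw [hTdef, Set.ncard_diff hMY hMfin, hY7, hM4]
    obtain ⟨t₁, t₂, t₃, h12, h13, h23, hTeq⟩ := Set.ncard_eq_three.mp hT3
    have hUT : UseSet 3 X ℓ = T := by
      apply Set.Subset.antisymm
      · -- users avoid the 4-point line
        intro A hA
        obtain ⟨hAX, hAl, hcov⟩ := uses_forward hX hA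
        have hAY : A ∈ Y := ⟨hAX, hAl⟩
        refine ⟨hAY, fun hAM => ?_⟩
        obtain ⟨g₁, g₂, hd1, hd2, hA1, hA2, hcov⟩ := hcov
        have h3 : (M \ {A}).ncard = 3 := by
          rw [Set.ncard_diff_singleton_of_mem hAM, hM4]
        obtain ⟨p₁, p₂, p₃, q12, q13, q23, hMeq⟩ := Set.ncard_eq_three.mp h3
        have hp1 : p₁ ∈ M \ {A} := by rw [hMeq]; left; rfl
        have hp2 : p₂ ∈ M \ {A} := by rw [hMeq]; right; left; rfl
        have hp3 : p₃ ∈ M \ {A} := by rw [hMeq]; right; right; rfl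
        have hgA : eval A g = 0 := hAM.2
        have cov : ∀ p ∈ M \ {A}, eval p g₁ = 0 ∨ eval p g₂ = 0 := fun p hp =>
          hcov p (hYX hp.1.1) hp.1.1.2 hp.2
        have e1 := cov p₁ hp1
        have e2 := cov p₂ hp2
        have e3 := cov p₃ hp3
        have z1 : eval p₁ g = 0 := hp1.1.2
        have z2 : eval p₂ g = 0 := hp2.1.2
        have z3 : eval p₃ g = 0 := hp3.1.2
        rcases e1 with e1 | e1 <;> rcases e2 with e2 | e2 <;> rcases e3 with e3 | e3
        · exact hA1 (U1 hdg hd1.le q12 z1 z2 hgA e1 e2)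
        · exact hA1 (U1 hdg hd1.le q12 z1 z2 hgA e1 e2)
        · exact hA1 (U1 hdg hd1.le q13 z1 z3 hgA e1 e3)
        · exact hA2 (U1 hdg hd2.le q23 z2 z3 hgA e2 e3)
        · exact hA1 (U1 hdg hd1.le q23 z2 z3 hgA e2 e3)
        · exact hA2 (U1 hdg hd2.le q13 z1 z3 hgA e1 e3)
        · exact hA2 (U1 hdg hd2.le q12 z1 z2 hgA e1 e2)
        · exact hA2 (U1 hdg hd2.le q12 z1 z2 hgA e1 e2)
      · -- each point off the 4-point line is a user
        intro A hAT
        have hAY : A ∈ Y := hAT.1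
        have key : ∀ u v : Pt, u ≠ v → T = {A, u, v} → A ∈ UseSet 3 X ℓ := by
          intro u v huv hTuv
          obtain ⟨e, hde, heu, hev⟩ := line_through huv
          refine uses_backward hX.1 hdegfℓ hZ (hYX hAY) hAY.2
            (mul_ne_zero (deg1_ne_zero hdg) (deg1_ne_zero hde))
            (le_trans (totalDegree_mul g e) (by rw [hdg, hde])) ?_
          intro B hBX hBl hBA
          have hBY : B ∈ Y := ⟨hBX, hBl⟩
          by_cases hBM : B ∈ M
          · rw [eval_mul, hBM.2, zero_mul]
          · have hBT : B ∈ T := ⟨hBY, hBM⟩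
            rw [hTuv] at hBT
            rcases hBT with rfl | rfl | rfl
            · exact absurd rfl hBA
            · rw [eval_mul, heu, mul_zero]
            · rw [eval_mul, hev, mul_zero]
        have hAT' := hAT
        rw [hTeq] at hAT'
        rcases hAT' with rfl | rfl | rfl
        · exact key t₂ t₃ h23 hTeq
        · refine key t₁ t₃ h13 ?_
          rw [hTeq]; ext x
          simp only [Set.mem_insert_iff, Set.mem_singleton_iff]; tauto
        · refine key t₁ t₂ h12 ?_
          rw [hTeq]; ext x
          simp only [Set.mem_insert_iff, Set.mem_singleton_iff]; tauto
    left
    rw [hUT]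
    exact hT3
  · -- no 4 collinear points in Y : at most one user
    push_neg at h4
    have hno4 : ∀ g : BPoly, g.totalDegree = 1 → {C ∈ Y | eval C g = 0}.ncard ≤ 3 := by
      intro g hg
      have := h4 g hg
      omega
    have hsub : ∀ a ∈ UseSet 3 X ℓ, ∀ b ∈ UseSet 3 X ℓ, a = b := by
      intro A hA B hB
      by_contra hAB
      exact two_users hYfin hY7 hno4 (hUseY hA) (hUseY hB) hAB
        (covconv (uses_forward hX hA).2.2) (covconv (uses_forward hX hB).2.2)
    have hle : (UseSet 3 X ℓ).ncard ≤ 1 := (Set.ncard_le_one hUSfin).mpr hsub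
    rcases Nat.le_one_iff_eq_zero_or_eq_one.mp hle with h | h
    · exact Or.inr (Or.inr h)
    · exact Or.inr (Or.inl h)
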